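/- Let f : X → Y be a W-continuous mapping of a gts X into a zero-dimensional gts Y. Then f is w-continuous. -/

import Mathlib

open Set TopologicalSpace Topology

universe u

/-- A generalized topology in the sense of Delfs–Knebusch (axioms following
Piękosz, Definition 2.2.1): `Cov` is the collection of admissible open families,
and the open sets are the members of `⋃₀ Cov`. -/
structure GenTop (X : Type u) : Type u where
  Cov : Set (Set (Set X))
  univ_open : Set.univ ∈ ⋃₀ Cov
  finite_admissible : ∀ 𝒰 : Set (Set X), 𝒰.Finite → 𝒰 ⊆ ⋃₀ Cov → 𝒰 ∈ Cov
  union_open : ∀ 𝒰 ∈ Cov, ⋃₀ 𝒰 ∈ ⋃₀ Cov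
  restrict : ∀ 𝒰 ∈ Cov, ∀ V ∈ ⋃₀ Cov, (fun U => V ∩ U) '' 𝒰 ∈ Cov
  transitive : ∀ 𝒰 ∈ Cov, ∀ f : Set X → Set (Set X),
    (∀ U ∈ 𝒰, f U ∈ Cov ∧ ⋃₀ f U = U) → {V : Set X | ∃ U ∈ 𝒰, V ∈ f U} ∈ Cov
  coarsen : ∀ 𝒰 ∈ Cov, ∀ 𝒱 ⊆ ⋃₀ Cov, (∀ U ∈ 𝒰, ∃ V ∈ 𝒱, U ⊆ V) →
    ⋃₀ 𝒱 = ⋃₀ 𝒰 → 𝒱 ∈ Cov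
  regular : ∀ 𝒰 ∈ Cov, ∀ W ⊆ ⋃₀ 𝒰, (∀ U ∈ 𝒰, W ∩ U ∈ ⋃₀ Cov) → W ∈ ⋃₀ Cov

namespace GenTop

variable {X : Type u} (G : GenTop X)

/-- The open sets of a gts. -/
def Opens : Set (Set X) := ⋃₀ G.Cov

/-- The closed sets of a gts. -/
def Closeds : Set (Set X) := {A : Set X | Aᶜ ∈ G.Opens}

/-- The topologization of a gts: the topology generated by the open sets. -/
def topol : TopologicalSpace X := TopologicalSpace.generateFrom G.Opens

/-- A gts is weakly normal if disjoint sets, each a singleton or closed,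
can be separated by disjoint open sets. -/
def WeaklyNormal : Prop :=
  ∀ A₁ A₂ : Set X, ((∃ x, A₁ = {x}) ∨ A₁ ∈ G.Closeds) →
    ((∃ x, A₂ = {x}) ∨ A₂ ∈ G.Closeds) → Disjoint A₁ A₂ →
    ∃ W₁ ∈ G.Opens, ∃ W₂ ∈ G.Opens, Disjoint W₁ W₂ ∧ A₁ ⊆ W₁ ∧ A₂ ⊆ W₂

end GenTop

/-- `𝒰 ⪯ 𝒱`: every member of `𝒰` is contained in a member of `𝒱` and the
unions agree. -/
def Refines {X : Type u} (𝒰 𝒱 : Set (Set X)) : Prop :=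
  (∀ U ∈ 𝒰, ∃ V ∈ 𝒱, U ⊆ V) ∧ ⋃₀ 𝒰 = ⋃₀ 𝒱

/-- `f` is w-continuous: every finite open cover `𝒱` of `Y` admits a finite
open cover `𝒰` of `X` with `𝒰 ⪯ f⁻¹(𝒱)`. -/
def WSmallCont {X Y : Type u} (GX : GenTop X) (GY : GenTop Y) (f : X → Y) : Prop :=
  ∀ 𝒱 ⊆ GY.Opens, 𝒱.Finite → ⋃₀ 𝒱 = Set.univ →
    ∃ 𝒰 ⊆ GX.Opens, 𝒰.Finite ∧ ⋃₀ 𝒰 = Set.univ ∧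
      Refines 𝒰 ((fun V => f ⁻¹' V) '' 𝒱)

/-- `f` is W-continuous: every admissible cover `𝒱` of `Y` admits an admissible
cover `𝒰` of `X` with `𝒰 ⪯ f⁻¹(𝒱)`. -/
def WBigCont {X Y : Type u} (GX : GenTop X) (GY : GenTop Y) (f : X → Y) : Prop :=
  ∀ 𝒱 ∈ GY.Cov, ⋃₀ 𝒱 = Set.univ →
    ∃ 𝒰 ∈ GX.Cov, ⋃₀ 𝒰 = Set.univ ∧ Refines 𝒰 ((fun V => f ⁻¹' V) '' 𝒱)

/-- A gts is zero-dimensional if every finite open cover has a pairwise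
disjoint finite open refinement cover. -/
def ZeroDim {Y : Type u} (GY : GenTop Y) : Prop :=
  ∀ 𝒱 ⊆ GY.Opens, 𝒱.Finite → ⋃₀ 𝒱 = Set.univ →
    ∃ 𝒲 ⊆ GY.Opens, 𝒲.Finite ∧ ⋃₀ 𝒲 = Set.univ ∧
      (∀ V ∈ 𝒲, ∀ W ∈ 𝒲, V ≠ W → Disjoint V W) ∧ Refines 𝒲 𝒱

/-- A W-continuous map into a zero-dimensional gts is w-continuous. -/
theorem stmt_18 {X Y : Type u} (GX : GenTop X) (GY : GenTop Y) (f : X → Y)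
    (hf : WBigCont GX GY f) (hY : ZeroDim GY) : WSmallCont GX GY f := by

  intro 𝒱 h𝒱op h𝒱fin h𝒱cov
  obtain ⟨𝒲, h𝒲op, h𝒲fin, h𝒲cov, h𝒲disj, h𝒲ref⟩ := hY 𝒱 h𝒱op h𝒱fin h𝒱cov
  have h𝒲Cov : 𝒲 ∈ GY.Cov := GY.finite_admissible 𝒲 h𝒲fin h𝒲op
  obtain ⟨𝒰, h𝒰Cov, h𝒰cov, h𝒰ref⟩ := hf 𝒲 h𝒲Cov h𝒲cov
  have h𝒰op : ∀ U ∈ 𝒰, U ∈ GX.Opens := fun U hU => ⟨𝒰, h𝒰Cov, hU⟩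
  have hemp : (∅ : Set X) ∈ GX.Opens := by
    have h0 : (∅ : Set (Set X)) ∈ GX.Cov :=
      GX.finite_admissible ∅ Set.finite_empty (Set.empty_subset _)
    simpa [GenTop.Opens] using GX.union_open ∅ h0
  -- each U ∈ 𝒰 is in some f⁻¹ W, W ∈ 𝒲
  have hUsub : ∀ U ∈ 𝒰, ∃ W ∈ 𝒲, U ⊆ f ⁻¹' W := by
    intro U hU
    obtain ⟨V, hV, hUV⟩ := h𝒰ref.1 U hU
    obtain ⟨W, hW, rfl⟩ := hV
    exact ⟨W, hW, hUV⟩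
  set g : Set Y → Set X := fun W => ⋃₀ {U | U ∈ 𝒰 ∧ U ⊆ f ⁻¹' W} with hg
  have hgsub : ∀ W, g W ⊆ f ⁻¹' W := fun W =>
    Set.sUnion_subset fun U hU => hU.2
  have hgopen : ∀ W ∈ 𝒲, g W ∈ GX.Opens := by
    intro W hW
    apply GX.regular 𝒰 h𝒰Cov
    · exact Set.sUnion_subset fun U hU => Set.subset_sUnion_of_mem hU.1
    · intro U hU
      by_cases h : U ⊆ f ⁻¹' W
      · have : g W ∩ U = U := by
          apply Set.inter_eq_self_of_subset_right
          exact Set.subset_sUnion_of_mem ⟨hU, h⟩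
        rw [this]; exact h𝒰op U hU
      · obtain ⟨W₀, hW₀, hUW₀⟩ := hUsub U hU
        have hne : W₀ ≠ W := by rintro rfl; exact h hUW₀
        have : g W ∩ U = ∅ := by
          apply Set.eq_empty_of_forall_notMem
          rintro x ⟨hx1, hx2⟩
          have hx1' : f x ∈ W := hgsub W hx1
          have hx2' : f x ∈ W₀ := hUW₀ hx2
          exact (h𝒲disj W₀ hW₀ W hW hne).le_bot ⟨hx2', hx1'⟩
        rw [this]; exact hemp
  refine ⟨g '' 𝒲, ?_, h𝒲fin.image g, ?_, ?_, ?_⟩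
  · rintro _ ⟨W, hW, rfl⟩; exact hgopen W hW
  · apply Set.eq_univ_of_univ_subset
    intro x _
    have hx : x ∈ ⋃₀ 𝒰 := h𝒰cov ▸ Set.mem_univ x
    obtain ⟨U, hU, hxU⟩ := hx
    obtain ⟨W, hW, hUW⟩ := hUsub U hU
    exact ⟨g W, ⟨W, hW, rfl⟩, U, ⟨hU, hUW⟩, hxU⟩
  · rintro _ ⟨W, hW, rfl⟩
    obtain ⟨V, hV, hWV⟩ := h𝒲ref.1 W hW
    exact ⟨f ⁻¹' V, ⟨V, hV, rfl⟩, (hgsub W).trans (Set.preimage_mono hWV)⟩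
  · have h1 : ⋃₀ ((fun V => f ⁻¹' V) '' 𝒱) = Set.univ := by
      rw [Set.sUnion_image, ← Set.preimage_iUnion₂]
      rw [← Set.sUnion_eq_biUnion, h𝒱cov, Set.preimage_univ]
    rw [h1]
    apply Set.eq_univ_of_univ_subset
    intro x _
    have hx : x ∈ ⋃₀ 𝒰 := h𝒰cov ▸ Set.mem_univ x
    obtain ⟨U, hU, hxU⟩ := hx
    obtain ⟨W, hW, hUW⟩ := hUsub U hU
    exact ⟨g W, ⟨W, hW, rfl⟩, U, ⟨hU, hUW⟩, hxU⟩
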